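/- Let λ, μ be real numbers with λ ≥ 1 and μ > 1, and let n be a natural number. Then for every z in the open unit disc 𝕌 the partial sum (𝔸[𝒲_{λ,μ}])_n(z) is nonzero for z ≠ 0 and Re(𝔸[𝒲_{λ,μ}](z)/(𝔸[𝒲_{λ,μ}])_n(z)) ≥ (2μ−2)/(2μ−1), where at z = 0 the ratio is understood as its analytic extension with value 1. -/

import Mathlib

/-- The Alexander transform of the normalized Wright function:
`𝔸[𝒲_{λ,μ}](z) = z + ∑_{m=1}^∞ (Γ(μ)/((m+1)! Γ(λm+μ))) z^{m+1}`. -/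
noncomputable def alexNormWright (lam mu : ℝ) (z : ℂ) : ℂ :=
  ∑' m : ℕ,
    ((Real.Gamma mu / (Nat.factorial (m + 1) * Real.Gamma (lam * m + mu)) : ℝ) : ℂ) * z ^ (m + 1)

/-- The `n`-th partial sum
`(𝔸[𝒲_{λ,μ}])_n(z) = z + ∑_{m=1}^n (Γ(μ)/((m+1)! Γ(λm+μ))) z^{m+1}`. -/
noncomputable def alexNormWrightPartial (lam mu : ℝ) (n : ℕ) (z : ℂ) : ℂ :=
  ∑ m ∈ Finset.range (n + 1),
    ((Real.Gamma mu / (Nat.factorial (m + 1) * Real.Gamma (lam * m + mu)) : ℝ) : ℂ) * z ^ (m + 1)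

lemma awf_two_pow_le_factorial (m : ℕ) : (2 : ℝ) ^ m ≤ (Nat.factorial (m + 1) : ℝ) := by
  induction m with
  | zero => norm_num
  | succ k ih =>
    have h2 : (0:ℝ) < 2 ^ k := by positivity
    have : (Nat.factorial (k + 2) : ℝ) = (k + 2) * Nat.factorial (k + 1) := by
      rw [Nat.factorial_succ]; push_cast; ring
    rw [pow_succ, this]
    have hk : (0:ℝ) ≤ (k:ℝ) := Nat.cast_nonneg k
    nlinarith

lemma awf_pow_mul_gamma_le {mu : ℝ} (hmu : 1 < mu) (m : ℕ) :
    mu ^ m * Real.Gamma mu ≤ Real.Gamma (mu + m) := by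
  induction m with
  | zero => simp
  | succ k ih =>
    have hpos : (0:ℝ) < mu + k := by positivity
    have h1 : Real.Gamma (mu + (k + 1)) = (mu + k) * Real.Gamma (mu + k) := by
      have : (mu + (k + 1) : ℝ) = (mu + k) + 1 := by push_cast; ring
      rw [this, Real.Gamma_add_one hpos.ne']
    have hg : 0 < Real.Gamma (mu + k) := Real.Gamma_pos_of_pos hpos
    have hmuk : mu ≤ mu + k := by
      have : (0:ℝ) ≤ k := Nat.cast_nonneg k
      linarith
    push_cast
    rw [h1, pow_succ]
    calc mu ^ k * mu * Real.Gamma mu = mu * (mu ^ k * Real.Gamma mu) := by ring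
      _ ≤ mu * Real.Gamma (mu + k) := by
          exact mul_le_mul_of_nonneg_left ih (by linarith)
      _ ≤ (mu + k) * Real.Gamma (mu + k) := by
          exact mul_le_mul_of_nonneg_right hmuk hg.le

lemma awf_coeff_le {lam mu : ℝ} (hlam : 1 ≤ lam) (hmu : 1 < mu) (m : ℕ) :
    Real.Gamma mu / (Nat.factorial (m + 1) * Real.Gamma (lam * m + mu)) ≤ (1 / (2 * mu)) ^ m := by
  have hmu0 : (0:ℝ) < mu := by linarith
  have hG : 0 < Real.Gamma mu := Real.Gamma_pos_of_pos hmu0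
  cases m with
  | zero => simp [Real.Gamma_pos_of_pos, hG.ne']
  | succ k =>
    set M : ℕ := k + 1 with hM
    have hM1 : (1:ℝ) ≤ (M:ℝ) := by exact_mod_cast Nat.one_le_iff_ne_zero.2 (by omega)
    have hargpos : (0:ℝ) < lam * M + mu := by nlinarith
    have hGL : 0 < Real.Gamma (lam * M + mu) := Real.Gamma_pos_of_pos hargpos
    have hmono : Real.Gamma (mu + M) ≤ Real.Gamma (lam * M + mu) := by
      rcases eq_or_lt_of_le (show mu + (M:ℝ) ≤ lam * M + mu by nlinarith) with h | h
      · rw [h]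
      · exact le_of_lt (Real.Gamma_strictMonoOn_Ici (by simp; linarith)
          (by simp; nlinarith) h)
    have h1 : mu ^ M * Real.Gamma mu ≤ Real.Gamma (lam * M + mu) :=
      (awf_pow_mul_gamma_le hmu M).trans hmono
    have h2 : (2:ℝ) ^ M ≤ (Nat.factorial (M + 1) : ℝ) := awf_two_pow_le_factorial M
    have hfac : (0:ℝ) < (Nat.factorial (M + 1) : ℝ) := by
      exact_mod_cast Nat.factorial_pos (M + 1)
    rw [div_le_iff₀ (by positivity), one_div, inv_pow, inv_mul_eq_div, le_div_iff₀ (by positivity)]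
    calc Real.Gamma mu * (2 * mu) ^ M = (2:ℝ) ^ M * (mu ^ M * Real.Gamma mu) := by
          rw [mul_pow]; ring
      _ ≤ (Nat.factorial (M + 1) : ℝ) * Real.Gamma (lam * M + mu) := by
          apply mul_le_mul h2 h1 (by positivity) hfac.le

theorem re_alexNormWright_div_partial (lam mu : ℝ) (hlam : 1 ≤ lam) (hmu : 1 < mu) (n : ℕ) :
    ∀ z : ℂ, ‖z‖ < 1 →
      (z ≠ 0 → alexNormWrightPartial lam mu n z ≠ 0) ∧
      (2 * mu - 2) / (2 * mu - 1) ≤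
        (if z = 0 then (1 : ℂ)
          else alexNormWright lam mu z / alexNormWrightPartial lam mu n z).re := by
  intro z hz
  have hmu0 : (0:ℝ) < mu := by linarith
  set q : ℝ := 1 / (2 * mu) with hqdef
  have hq0 : 0 < q := by positivity
  have hq1 : q < 1 := by rw [hqdef, div_lt_one (by linarith)]; linarith
  set a : ℕ → ℝ := fun m =>
    Real.Gamma mu / (Nat.factorial (m + 1) * Real.Gamma (lam * m + mu)) with ha
  have hapos : ∀ m, 0 < a m := by
    intro m
    have hm0 : (0:ℝ) ≤ (m:ℝ) := Nat.cast_nonneg m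
    have harg : (0:ℝ) < lam * m + mu := by nlinarith
    have hfac : (0:ℝ) < (Nat.factorial (m + 1) : ℝ) := by
      exact_mod_cast Nat.factorial_pos (m + 1)
    exact div_pos (Real.Gamma_pos_of_pos hmu0)
      (mul_pos hfac (Real.Gamma_pos_of_pos harg))
  have hale : ∀ m, a m ≤ q ^ m := fun m => awf_coeff_le hlam hmu m
  have ha0 : a 0 = 1 := by
    simp only [ha, Nat.cast_zero, mul_zero, zero_add, Nat.factorial_one, Nat.cast_one, one_mul]
    exact div_self (Real.Gamma_pos_of_pos hmu0).ne'
  have hzn : ‖z‖ ≤ 1 := hz.le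
  have hf : alexNormWright lam mu z = ∑' m : ℕ, ((a m : ℝ) : ℂ) * z ^ (m + 1) := rfl
  have hp : alexNormWrightPartial lam mu n z
      = ∑ m ∈ Finset.range (n + 1), ((a m : ℝ) : ℂ) * z ^ (m + 1) := rfl
  have hgeom : Summable (fun m : ℕ => q ^ m) := summable_geometric_of_lt_one hq0.le hq1
  have hpowle : ∀ m : ℕ, ‖z‖ ^ (m + 1) ≤ ‖z‖ :=
    fun m => pow_le_of_le_one (norm_nonneg z) hzn (Nat.succ_ne_zero m)
  have hnorm_eq : ∀ m : ℕ, ‖((a m : ℝ) : ℂ) * z ^ (m + 1)‖ = a m * ‖z‖ ^ (m + 1) := by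
    intro m
    rw [norm_mul, norm_pow, Complex.norm_real, Real.norm_of_nonneg (hapos m).le]
  have hnormle : ∀ m : ℕ, ‖((a m : ℝ) : ℂ) * z ^ (m + 1)‖ ≤ q ^ m := by
    intro m
    rw [hnorm_eq m]
    calc a m * ‖z‖ ^ (m + 1) ≤ q ^ m * 1 := by
          apply mul_le_mul (hale m) ((hpowle m).trans hzn) (by positivity) (by positivity)
      _ = q ^ m := mul_one _
  have hsumC : Summable (fun m : ℕ => ((a m : ℝ) : ℂ) * z ^ (m + 1)) :=
    Summable.of_norm_bounded hgeom hnormle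
  have hsumA : Summable a :=
    Summable.of_nonneg_of_le (fun m => (hapos m).le) hale hgeom
  have hsumA1 : Summable (fun i => a (i + 1)) := (summable_nat_add_iff 1).2 hsumA
  have hsumT : Summable (fun i => a (i + (n + 1))) := (summable_nat_add_iff (n + 1)).2 hsumA
  set S : ℝ := ∑ i ∈ Finset.range n, a (i + 1) with hSdef
  set T : ℝ := ∑' i : ℕ, a (i + (n + 1)) with hTdef
  have hS0 : 0 ≤ S := Finset.sum_nonneg fun i _ => (hapos _).le
  have hT0 : 0 ≤ T := tsum_nonneg fun i => (hapos _).le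
  have hsplitA : S + T = ∑' i : ℕ, a (i + 1) := by
    have h := Summable.sum_add_tsum_nat_add (f := fun i => a (i + 1)) n hsumA1
    rw [hSdef, hTdef, ← h]
    rfl
  have hST : S + T ≤ 1 / (2 * mu - 1) := by
    have h1 : Summable (fun i : ℕ => q ^ (i + 1)) := (summable_nat_add_iff 1).2 hgeom
    have h2 : (∑' i : ℕ, a (i + 1)) ≤ ∑' i : ℕ, q ^ (i + 1) :=
      Summable.tsum_le_tsum (fun i => hale (i + 1)) hsumA1 h1
    have h3 : (∑' i : ℕ, q ^ (i + 1)) = q / (1 - q) := by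
      simp only [pow_succ]
      rw [tsum_mul_right, tsum_geometric_of_lt_one hq0.le hq1, div_eq_mul_inv, mul_comm]
    have h4 : q / (1 - q) = 1 / (2 * mu - 1) := by
      rw [hqdef]
      have hne : (2 * mu : ℝ) ≠ 0 := by positivity
      have hne2 : (2 * mu - 1 : ℝ) ≠ 0 := by intro h; nlinarith
      field_simp
    rw [hsplitA]
    calc (∑' i : ℕ, a (i + 1)) ≤ ∑' i : ℕ, q ^ (i + 1) := h2
      _ = 1 / (2 * mu - 1) := by rw [h3, h4]
  have hB1 : 1 / (2 * mu - 1) < 1 := by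
    rw [div_lt_one (by linarith)]; linarith
  have hS1 : S < 1 := by linarith
  -- lower bound on the partial sum
  have hpart_lb : ‖z‖ * (1 - S) ≤ ‖alexNormWrightPartial lam mu n z‖ := by
    rw [hp, Finset.sum_range_succ']
    have hz0' : ((a 0 : ℝ) : ℂ) * z ^ (0 + 1) = z := by
      rw [ha0]; simp
    rw [hz0']
    set R : ℂ := ∑ i ∈ Finset.range n, ((a (i + 1) : ℝ) : ℂ) * z ^ (i + 1 + 1) with hRdef
    have hRle : ‖R‖ ≤ ‖z‖ * S := by
      calc ‖R‖ ≤ ∑ i ∈ Finset.range n, ‖((a (i + 1) : ℝ) : ℂ) * z ^ (i + 1 + 1)‖ :=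
            norm_sum_le _ _
        _ ≤ ∑ i ∈ Finset.range n, ‖z‖ * a (i + 1) := by
            apply Finset.sum_le_sum
            intro i _
            rw [hnorm_eq (i + 1)]
            calc a (i + 1) * ‖z‖ ^ (i + 1 + 1) ≤ a (i + 1) * ‖z‖ :=
                  mul_le_mul_of_nonneg_left (hpowle (i + 1)) (hapos _).le
              _ = ‖z‖ * a (i + 1) := mul_comm _ _
        _ = ‖z‖ * S := by rw [hSdef, Finset.mul_sum]
    have htri : ‖z‖ ≤ ‖R + z‖ + ‖R‖ := by
      calc ‖z‖ = ‖(R + z) + (-R)‖ := by ring_nf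
        _ ≤ ‖R + z‖ + ‖-R‖ := norm_add_le _ _
        _ = ‖R + z‖ + ‖R‖ := by rw [norm_neg]
    nlinarith [norm_nonneg z, norm_nonneg R]
  -- the tail
  set t : ℂ := ∑' i : ℕ, ((a (i + (n + 1)) : ℝ) : ℂ) * z ^ (i + (n + 1) + 1) with htdef
  have hsplitC : alexNormWright lam mu z = alexNormWrightPartial lam mu n z + t := by
    rw [hf, hp, htdef, ← Summable.sum_add_tsum_nat_add (f := fun m => ((a m : ℝ) : ℂ) * z ^ (m + 1))
      (n + 1) hsumC]
  have htail_ub : ‖t‖ ≤ ‖z‖ * T := by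
    rw [htdef]
    apply tsum_of_norm_bounded (g := fun i => ‖z‖ * a (i + (n + 1)))
      ((hsumT.hasSum).mul_left ‖z‖)
    intro i
    rw [hnorm_eq (i + (n + 1))]
    calc a (i + (n + 1)) * ‖z‖ ^ (i + (n + 1) + 1) ≤ a (i + (n + 1)) * ‖z‖ :=
          mul_le_mul_of_nonneg_left (hpowle _) (hapos _).le
      _ = ‖z‖ * a (i + (n + 1)) := mul_comm _ _
  rcases eq_or_ne z 0 with rfl | hzne
  · refine ⟨fun h => absurd rfl h, ?_⟩
    rw [if_pos rfl, Complex.one_re, div_le_one (by linarith)]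
    linarith
  · have hzpos : 0 < ‖z‖ := norm_pos_iff.2 hzne
    have hspos : 0 < ‖alexNormWrightPartial lam mu n z‖ :=
      lt_of_lt_of_le (mul_pos hzpos (by linarith)) hpart_lb
    have hsne : alexNormWrightPartial lam mu n z ≠ 0 := norm_pos_iff.1 hspos
    refine ⟨fun _ => hsne, ?_⟩
    rw [if_neg hzne, hsplitC, add_div, div_self hsne, Complex.add_re, Complex.one_re]
    have hratio : ‖t / alexNormWrightPartial lam mu n z‖ ≤ 1 / (2 * mu - 1) := by
      rw [norm_div]
      calc ‖t‖ / ‖alexNormWrightPartial lam mu n z‖ ≤ (‖z‖ * T) / (‖z‖ * (1 - S)) :=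
            div_le_div₀ (mul_nonneg (norm_nonneg z) hT0) htail_ub (mul_pos hzpos (by linarith)) hpart_lb
        _ = T / (1 - S) := mul_div_mul_left _ _ hzpos.ne'
        _ ≤ 1 / (2 * mu - 1) := by
            rw [div_le_div_iff₀ (by linarith) (by linarith)]
            have hmul : (S + T) * (2 * mu - 1) ≤ (1 / (2 * mu - 1)) * (2 * mu - 1) :=
              mul_le_mul_of_nonneg_right hST (by linarith)
            have hone : (1 / (2 * mu - 1)) * (2 * mu - 1) = 1 :=
              one_div_mul_cancel (by intro h; nlinarith)
            nlinarith
    have hre : -(1 / (2 * mu - 1)) ≤ (t / alexNormWrightPartial lam mu n z).re := by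
      have h1 : |(t / alexNormWrightPartial lam mu n z).re| ≤
          ‖t / alexNormWrightPartial lam mu n z‖ := Complex.abs_re_le_norm _
      have := (abs_le.1 (h1.trans hratio)).1
      linarith
    have heq : (2 * mu - 2) / (2 * mu - 1) = 1 - 1 / (2 * mu - 1) := by
      have hne2 : (2 * mu - 1 : ℝ) ≠ 0 := by intro h; nlinarith
      field_simp
      ring
    linarith
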